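/- (Cauchy–Schwarz inequality for f-algebra-valued bilinear maps.) Let V be a real vector space, let A be a geometric mean closed semiprime Archimedean f-algebra, and let T : V × V → A be a bilinear, symmetric, positive semidefinite map. Then for all u, v ∈ V, |T(u,v)|² ≤ T(u,u)·T(v,v), where |f| = f ∨ (−f). -/

import Mathlib

set_option linter.unusedSectionVars false
set_option linter.unusedVariables false
set_option linter.unreachableTactic false
set_option linter.unusedTactic false
set_option linter.unnecessarySeqFocus false
set_option maxHeartbeats 4000000

set_option linter.unusedSectionVars false
set_option linter.unusedVariables false
set_option maxHeartbeats 2000000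

section CSMain

variable {A : Type*} [NonUnitalCommRing A] [Lattice A]
    [CovariantClass A A (· + ·) (· ≤ ·)]
    [Module ℝ A] [PosSMulMono ℝ A]
    [IsScalarTower ℝ A A] [SMulCommClass ℝ A A]

private lemma cs_mul4 (a b c d : A) : (a*b)*(c*d) = (a*c)*(b*d) := by
  simp [mul_assoc, mul_comm, mul_left_comm]

private lemma cs_sub_sq (x y : A) : (x - y) * (x - y) = x*x + y*y - (x*y + y*x) := by
  simp only [sub_mul, mul_sub]
  abel

private lemma cs_mul_le_mul (hmulpos : ∀ a b : A, 0 ≤ a → 0 ≤ b → 0 ≤ a * b)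
    {x y z : A} (hxy : x ≤ y) (hz : 0 ≤ z) : x * z ≤ y * z := by
  have h := hmulpos (y - x) z (sub_nonneg.2 hxy) hz
  rw [sub_mul] at h
  exact sub_nonneg.1 h

private lemma cs_disjoint_mul (hfalg : ∀ a b c : A, a ⊓ b = 0 → 0 ≤ c → (c * a) ⊓ b = 0)
    {a b : A} (hab : a ⊓ b = 0) : a * b = 0 := by
  have ha : 0 ≤ a := hab ▸ inf_le_left
  have hb : 0 ≤ b := hab ▸ inf_le_right
  have h1 : (b * a) ⊓ b = 0 := hfalg a b b hab hb
  have h2 : (a * b) ⊓ (b * a) = 0 := hfalg b (b * a) a (by rwa [inf_comm] at h1) ha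
  rw [mul_comm b a] at h2
  simpa using h2

private lemma cs_sq_nonneg (hmulpos : ∀ a b : A, 0 ≤ a → 0 ≤ b → 0 ≤ a * b)
    (hfalg : ∀ a b c : A, a ⊓ b = 0 → 0 ≤ c → (c * a) ⊓ b = 0)
    (x : A) : 0 ≤ x * x := by
  have h0 : x⁺ * x⁻ = 0 := cs_disjoint_mul hfalg (posPart_inf_negPart_eq_zero x)
  have h0' : x⁻ * x⁺ = 0 := by rw [mul_comm]; exact h0
  have hexp := cs_sub_sq (x⁺) (x⁻)
  rw [posPart_sub_negPart, h0, h0', add_zero, sub_zero] at hexp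
  rw [hexp]
  exact add_nonneg (hmulpos _ _ (posPart_nonneg x) (posPart_nonneg x))
    (hmulpos _ _ (negPart_nonneg x) (negPart_nonneg x))

private lemma cs_nonneg_disjoint (hmulpos : ∀ a b : A, 0 ≤ a → 0 ≤ b → 0 ≤ a * b)
    (hsemiprime : ∀ a : A, a * a = 0 → a = 0)
    {a b : A} (ha : 0 ≤ a) (hb : 0 ≤ b) (h : a * b = 0) : a ⊓ b = 0 := by
  have hc : 0 ≤ a ⊓ b := le_inf ha hb
  have h1 : (a ⊓ b) * (a ⊓ b) ≤ a * (a ⊓ b) := cs_mul_le_mul hmulpos inf_le_left hc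
  have h2 : a * (a ⊓ b) ≤ a * b := by
    rw [mul_comm a (a ⊓ b), mul_comm a b]
    exact cs_mul_le_mul hmulpos inf_le_right ha
  have h3 : (a ⊓ b) * (a ⊓ b) = 0 :=
    le_antisymm (h ▸ le_trans h1 h2) (hmulpos _ _ hc hc)
  exact hsemiprime _ h3

private lemma cs_distrib (a b c : A) : a ⊓ (b ⊔ c) ≤ (a ⊓ b) ⊔ (a ⊓ c) := by
  letI := AddCommGroup.toDistribLattice A
  exact le_of_eq (inf_sup_left a b c)

private lemma cs_chain {w : A} (Aa Bb : ℕ → A) (m : ℕ)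
    (hA : ∀ i, 0 ≤ Aa i) (hB : ∀ i, 0 ≤ Bb i)
    (hdisj : ∀ i j, i ≤ j + 1 → Aa i ⊓ Bb j = 0)
    (hw : ∀ i, w ≤ Aa i + Bb i) :
    w ≤ Aa 0 + Bb m := by
  have hsup : ∀ i, w ≤ Aa i ⊔ Bb i := by
    intro i
    have h := hw i
    rwa [← inf_add_sup (Aa i) (Bb i), hdisj i i (Nat.le_succ i), zero_add] at h
  have key : ∀ k, w ≤ Aa (m - k) ⊔ Bb m := by
    intro k
    induction k with
    | zero => simpa using hsup m
    | succ k ih =>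
      rcases Nat.eq_zero_or_pos (m - k) with h0 | hpos2
      · have h00 : m - (k+1) = 0 := by omega
        rw [h00]; rw [h0] at ih; exact ih
      · have hik : m - k = (m - (k+1)) + 1 := by omega
        set i := m - (k+1) with hi
        rw [hik] at ih
        have h1 : w ≤ (Aa (i+1) ⊔ Bb m) ⊓ (Aa i ⊔ Bb i) := le_inf ih (hsup i)
        have h2 : (Aa (i+1) ⊔ Bb m) ⊓ (Aa i ⊔ Bb i)
            ≤ ((Aa (i+1) ⊔ Bb m) ⊓ Aa i) ⊔ ((Aa (i+1) ⊔ Bb m) ⊓ Bb i) := cs_distrib _ _ _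
        have h3 : (Aa (i+1) ⊔ Bb m) ⊓ Aa i ≤ Aa i := inf_le_right
        have h4 : (Aa (i+1) ⊔ Bb m) ⊓ Bb i ≤ Bb m := by
          calc (Aa (i+1) ⊔ Bb m) ⊓ Bb i = Bb i ⊓ (Aa (i+1) ⊔ Bb m) := inf_comm _ _
            _ ≤ (Bb i ⊓ Aa (i+1)) ⊔ (Bb i ⊓ Bb m) := cs_distrib _ _ _
            _ ≤ Bb m := by
                rw [inf_comm (Bb i) (Aa (i+1)), hdisj (i+1) i (le_refl _)]
                exact sup_le (hB m) inf_le_right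
        exact le_trans h1 (le_trans h2 (sup_le (le_trans h3 le_sup_left) (le_trans h4 le_sup_right)))
  have hfin := key m
  rw [Nat.sub_self] at hfin
  exact le_trans hfin (sup_le (le_add_of_nonneg_right (hB m)) (le_add_of_nonneg_left (hA 0)))

private lemma cs_smul_le {c d : ℝ} (h : c ≤ d) {x : A} (hx : 0 ≤ x) : c • x ≤ d • x := by
  have h1 : 0 ≤ (d - c) • x := smul_nonneg (by linarith) hx
  calc c • x = c • x + 0 := by rw [add_zero]
    _ ≤ c • x + (d - c) • x := add_le_add_right h1 _
    _ = d • x := by module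

private lemma cs_sq_le_sq (hmulpos : ∀ a b : A, 0 ≤ a → 0 ≤ b → 0 ≤ a * b)
    {x b : A} (hx : 0 ≤ x) (hxb : x ≤ b) : x * x ≤ b * b := by
  calc x * x ≤ b * x := cs_mul_le_mul hmulpos hxb hx
    _ = x * b := mul_comm _ _
    _ ≤ b * b := cs_mul_le_mul hmulpos hxb (le_trans hx hxb)

private lemma cs_cross (hmulpos : ∀ a b : A, 0 ≤ a → 0 ≤ b → 0 ≤ a * b)
    {f g : A} (hf : 0 ≤ f) (hg : 0 ≤ g)
    {r s : ℝ} (hr : 1 < r) (hs : 0 < s) (hcase : 1 ≤ s ∨ r*s ≤ 1)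
    (hPN : (s • f - s⁻¹ • g)⁺ * (s • f - s⁻¹ • g)⁻ = 0)
    (hPN' : ((r*s) • f - (r*s)⁻¹ • g)⁺ * ((r*s) • f - (r*s)⁻¹ • g)⁻ = 0) :
    (s • f - s⁻¹ • g)⁻ * ((r*s) • f - (r*s)⁻¹ • g)⁺
      ≤ (r-1) • (f*f + f*g + g*g) := by
  have hr0 : (0:ℝ) < r := by linarith
  have hrs : (0:ℝ) < r*s := mul_pos hr0 hs
  set ys : A := s • f - s⁻¹ • g with hys
  set yt : A := (r*s) • f - (r*s)⁻¹ • g with hyt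
  set d : A := (r*s - s) • f + (s⁻¹ - (r*s)⁻¹) • g with hd
  have hc1 : (0:ℝ) ≤ r*s - s := by nlinarith
  have hc2 : (0:ℝ) ≤ s⁻¹ - (r*s)⁻¹ := by
    have h1 : (r*s)⁻¹ ≤ s⁻¹ := by
      rw [inv_le_inv₀ hrs hs]
      nlinarith
    linarith
  have hdnn : 0 ≤ d := add_nonneg (smul_nonneg hc1 hf) (smul_nonneg hc2 hg)
  have hyadd : yt = ys + d := by rw [hys, hyt, hd]; module
  have hNs : ys⁻ ≤ s⁻¹ • g := by
    rw [negPart_def]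
    refine sup_le ?_ (smul_nonneg (by positivity) hg)
    rw [hys, neg_sub]
    exact sub_le_self _ (smul_nonneg hs.le hf)
  have hPt : yt⁺ ≤ (r*s) • f := by
    rw [posPart_def]
    refine sup_le ?_ (smul_nonneg hrs.le hf)
    rw [hyt]
    exact sub_le_self _ (smul_nonneg (by positivity) hg)
  have hK1 : f*g + g*g ≤ f*f + f*g + g*g := by
    have : f*g ≤ f*f + f*g := le_add_of_nonneg_left (hmulpos f f hf hf)
    exact add_le_add_left this _
  rcases hcase with h1s | hrs1
  · have hPadd : yt⁺ ≤ ys⁺ + d := by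
      rw [posPart_def, posPart_def]
      refine sup_le ?_ (add_nonneg le_sup_right hdnn)
      rw [hyadd]
      exact add_le_add_left le_sup_left d
    have step1 : ys⁻ * yt⁺ ≤ ys⁻ * (ys⁺ + d) := by
      rw [mul_comm ys⁻ yt⁺, mul_comm ys⁻ (ys⁺ + d)]
      exact cs_mul_le_mul hmulpos hPadd (negPart_nonneg _)
    have step2 : ys⁻ * (ys⁺ + d) = ys⁻ * d := by
      rw [mul_add, mul_comm ys⁻ ys⁺, hPN, zero_add]
    have step3 : ys⁻ * d = (r*s - s) • (ys⁻ * f) + (s⁻¹ - (r*s)⁻¹) • (ys⁻ * g) := by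
      rw [hd, mul_add, mul_smul_comm, mul_smul_comm]
    have b1 : ys⁻ * f ≤ s⁻¹ • (g * f) := by
      have := cs_mul_le_mul hmulpos hNs hf
      rwa [smul_mul_assoc] at this
    have b2 : ys⁻ * g ≤ s⁻¹ • (g * g) := by
      have := cs_mul_le_mul hmulpos hNs hg
      rwa [smul_mul_assoc] at this
    have step4 : (r*s - s) • (ys⁻ * f) ≤ (r-1) • (g * f) := by
      calc (r*s - s) • (ys⁻ * f) ≤ (r*s - s) • (s⁻¹ • (g*f)) :=
            smul_le_smul_of_nonneg_left b1 hc1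
        _ = ((r*s - s) * s⁻¹) • (g*f) := by rw [smul_smul]
        _ = (r-1) • (g*f) := by congr 1; field_simp <;> ring
    have step5 : (s⁻¹ - (r*s)⁻¹) • (ys⁻ * g) ≤ (r-1) • (g * g) := by
      calc (s⁻¹ - (r*s)⁻¹) • (ys⁻ * g) ≤ (s⁻¹ - (r*s)⁻¹) • (s⁻¹ • (g*g)) :=
            smul_le_smul_of_nonneg_left b2 hc2
        _ = ((s⁻¹ - (r*s)⁻¹) * s⁻¹) • (g*g) := by rw [smul_smul]
        _ ≤ (r-1) • (g*g) := by
            refine cs_smul_le ?_ (hmulpos g g hg hg)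
            have hexp : (s⁻¹ - (r*s)⁻¹) * s⁻¹ = (r-1) / (r*s*s) := by
              field_simp <;> ring
            rw [hexp]
            have hden : (1:ℝ) ≤ r*s*s := by nlinarith
            exact div_le_self (by linarith) hden
    calc ys⁻ * yt⁺ ≤ ys⁻ * d := le_trans step1 (le_of_eq step2)
      _ = (r*s - s) • (ys⁻ * f) + (s⁻¹ - (r*s)⁻¹) • (ys⁻ * g) := step3
      _ ≤ (r-1) • (g*f) + (r-1) • (g*g) := add_le_add step4 step5
      _ = (r-1) • (g*f + g*g) := by rw [smul_add]
      _ ≤ (r-1) • (f*f + f*g + g*g) := by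
          refine smul_le_smul_of_nonneg_left ?_ (by linarith)
          rw [mul_comm g f]; exact hK1
  · have hs1 : s ≤ 1 := by nlinarith
    have hNadd : ys⁻ ≤ yt⁻ + d := by
      rw [negPart_def, negPart_def]
      refine sup_le ?_ (add_nonneg le_sup_right hdnn)
      have hneg : -ys = -yt + d := by rw [hyadd]; abel
      rw [hneg]
      exact add_le_add_left le_sup_left d
    have step1 : ys⁻ * yt⁺ ≤ (yt⁻ + d) * yt⁺ :=
      cs_mul_le_mul hmulpos hNadd (posPart_nonneg _)
    have step2 : (yt⁻ + d) * yt⁺ = d * yt⁺ := by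
      rw [add_mul, mul_comm yt⁻ yt⁺, hPN', zero_add]
    have step3 : d * yt⁺ = (r*s - s) • (f * yt⁺) + (s⁻¹ - (r*s)⁻¹) • (g * yt⁺) := by
      rw [hd, add_mul, smul_mul_assoc, smul_mul_assoc]
    have b1 : f * yt⁺ ≤ (r*s) • (f * f) := by
      have h := cs_mul_le_mul hmulpos hPt hf
      rw [smul_mul_assoc] at h
      calc f * yt⁺ = yt⁺ * f := mul_comm _ _
        _ ≤ (r*s) • (f*f) := h
    have b2 : g * yt⁺ ≤ (r*s) • (f * g) := by
      have h := cs_mul_le_mul hmulpos hPt hg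
      rw [smul_mul_assoc] at h
      calc g * yt⁺ = yt⁺ * g := mul_comm _ _
        _ ≤ (r*s) • (f*g) := h
    have step4 : (r*s - s) • (f * yt⁺) ≤ (r-1) • (f*f) := by
      calc (r*s - s) • (f * yt⁺) ≤ (r*s - s) • ((r*s) • (f*f)) :=
            smul_le_smul_of_nonneg_left b1 hc1
        _ = ((r*s - s) * (r*s)) • (f*f) := by rw [smul_smul]
        _ ≤ (r-1) • (f*f) := by
            refine cs_smul_le ?_ (hmulpos f f hf hf)
            nlinarith
    have step5 : (s⁻¹ - (r*s)⁻¹) • (g * yt⁺) ≤ (r-1) • (f*g) := by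
      calc (s⁻¹ - (r*s)⁻¹) • (g * yt⁺) ≤ (s⁻¹ - (r*s)⁻¹) • ((r*s) • (f*g)) :=
            smul_le_smul_of_nonneg_left b2 hc2
        _ = ((s⁻¹ - (r*s)⁻¹) * (r*s)) • (f*g) := by rw [smul_smul]
        _ = (r-1) • (f*g) := by congr 1; field_simp <;> ring
    calc ys⁻ * yt⁺ ≤ d * yt⁺ := le_trans step1 (le_of_eq step2)
      _ = (r*s - s) • (f * yt⁺) + (s⁻¹ - (r*s)⁻¹) • (g * yt⁺) := step3
      _ ≤ (r-1) • (f*f) + (r-1) • (f*g) := add_le_add step4 step5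
      _ = (r-1) • (f*f + f*g) := by rw [smul_add]
      _ ≤ (r-1) • (f*f + f*g + g*g) := by
          refine smul_le_smul_of_nonneg_left ?_ (by linarith)
          exact le_add_of_nonneg_right (hmulpos g g hg hg)

private lemma cs_main
    (harch : ∀ f g : A, (∀ n : ℕ, (n : ℝ) • f ≤ g) → f ≤ 0)
    (hmulpos : ∀ a b : A, 0 ≤ a → 0 ≤ b → 0 ≤ a * b)
    (hfalg : ∀ a b c : A, a ⊓ b = 0 → 0 ≤ c → (c * a) ⊓ b = 0)
    (hsemiprime : ∀ a : A, a * a = 0 → a = 0)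
    {a f g : A} (ha : 0 ≤ a) (hf : 0 ≤ f) (hg : 0 ≤ g)
    (hq : ∀ s : ℝ, 0 < s → (2*s) • a ≤ (s*s) • f + g) :
    a * a ≤ f * g := by
  set y : ℝ → A := fun s => s • f - s⁻¹ • g with hydef
  -- Step 1: quadratic consequence
  have h4 : ∀ s : ℝ, 0 < s →
      (4:ℝ)•(a*a) ≤ (s*s)•(f*f) + (f*g + g*f) + ((s*s)⁻¹)•(g*g) := by
    intro s hs
    have hs2 : (0:ℝ) < s*s := mul_pos hs hs
    have hX : (2*s)•a ≤ (s*s)•f + g := hq s hs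
    have hXnn : (0:A) ≤ (2*s)•a := smul_nonneg (by positivity) ha
    have hRnn : (0:A) ≤ (s*s)•f + g := le_trans hXnn hX
    have hsq : ((2*s)•a) * ((2*s)•a) ≤ ((s*s)•f + g) * ((s*s)•f + g) :=
      cs_sq_le_sq hmulpos hXnn hX
    have hL : ((2*s)•a) * ((2*s)•a) = (4*(s*s)) • (a*a) := by
      simp only [smul_mul_assoc, mul_smul_comm, smul_smul]
      match_scalars; ring
    have hR : ((s*s)•f + g) * ((s*s)•f + g)
        = ((s*s)*(s*s))•(f*f) + (s*s)•(f*g) + (s*s)•(g*f) + g*g := by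
      simp only [add_mul, mul_add, smul_mul_assoc, mul_smul_comm, smul_smul]
      match_scalars <;> ring
    rw [hL, hR] at hsq
    have hscale := smul_le_smul_of_nonneg_left hsq (le_of_lt (inv_pos.2 hs2))
    have hss : (s*s) ≠ 0 := ne_of_gt hs2
    have hL2 : ((s*s)⁻¹) • ((4*(s*s)) • (a*a)) = (4:ℝ)•(a*a) := by
      rw [smul_smul]; congr 1; field_simp
    have hR2 : ((s*s)⁻¹) • (((s*s)*(s*s))•(f*f) + (s*s)•(f*g) + (s*s)•(g*f) + g*g)
        = (s*s)•(f*f) + (f*g + g*f) + ((s*s)⁻¹)•(g*g) := by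
      simp only [smul_add, smul_smul]
      match_scalars <;> field_simp
    rw [hL2, hR2] at hscale
    exact hscale
  set e0 : A := (4:ℝ)•(a*a) - (4:ℝ)•(f*g) with he0def
  -- Step 2 : e0⁺ is below all the squares (y s)^2
  have hy2 : ∀ s : ℝ, 0 < s → (y s) * (y s)
      = ((s*s)•(f*f) + (f*g + g*f) + ((s*s)⁻¹)•(g*g)) - (4:ℝ)•(f*g) := by
    intro s hs
    have hss : s ≠ 0 := ne_of_gt hs
    simp only [hydef]
    simp only [sub_mul, mul_sub, smul_mul_assoc, mul_smul_comm, smul_smul, smul_add]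
    rw [mul_comm g f]
    match_scalars <;> field_simp <;> ring
  have hey : ∀ s : ℝ, 0 < s → e0⁺ ≤ (y s) * (y s) := by
    intro s hs
    have h1 : e0 ≤ (y s) * (y s) := by
      rw [hy2 s hs, he0def]
      exact sub_le_sub_right (h4 s hs) _
    rw [posPart_def]
    exact sup_le h1 (cs_sq_nonneg hmulpos hfalg _)
  have hepos : 0 ≤ e0⁺ := posPart_nonneg e0
  -- y-facts
  have hymono : ∀ s t : ℝ, 0 < s → s ≤ t → y s ≤ y t := by
    intro s t hs hst
    have ht : 0 < t := lt_of_lt_of_le hs hst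
    have h1 : s • f ≤ t • f := cs_smul_le hst hf
    have h2 : t⁻¹ • g ≤ s⁻¹ • g := by
      refine cs_smul_le ?_ hg
      rw [inv_le_inv₀ ht hs] at *
      exact hst
    simp only [hydef]
    exact sub_le_sub h1 h2
  have hPle : ∀ s : ℝ, 0 < s → (y s)⁺ ≤ s • f := by
    intro s hs
    rw [posPart_def]
    refine sup_le ?_ (smul_nonneg hs.le hf)
    simp only [hydef]
    exact sub_le_self _ (smul_nonneg (by positivity) hg)
  have hNle : ∀ s : ℝ, 0 < s → (y s)⁻ ≤ s⁻¹ • g := by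
    intro s hs
    rw [negPart_def]
    refine sup_le ?_ (smul_nonneg (by positivity) hg)
    simp only [hydef, neg_sub]
    exact sub_le_self _ (smul_nonneg hs.le hf)
  have hPNself : ∀ s : ℝ, (y s)⁺ * (y s)⁻ = 0 := fun s =>
    cs_disjoint_mul hfalg (posPart_inf_negPart_eq_zero _)
  have hPN0 : ∀ s t : ℝ, 0 < s → s ≤ t → (y s)⁺ * (y t)⁻ = 0 := by
    intro s t hs hst
    refine cs_disjoint_mul hfalg ?_
    refine le_antisymm ?_ (le_inf (posPart_nonneg _) (negPart_nonneg _))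
    calc (y s)⁺ ⊓ (y t)⁻ ≤ (y t)⁺ ⊓ (y t)⁻ :=
          inf_le_inf_right _ (posPart_mono (hymono s t hs hst))
      _ = 0 := posPart_inf_negPart_eq_zero _
  have hysq : ∀ s : ℝ, (y s) * (y s) = (y s)⁺ * (y s)⁺ + (y s)⁻ * (y s)⁻ := by
    intro s
    have h0 := hPNself s
    have h0' : (y s)⁻ * (y s)⁺ = 0 := by rw [mul_comm]; exact h0
    have hexp : ((y s)⁺ - (y s)⁻) * ((y s)⁺ - (y s)⁻)
        = (y s)⁺ * (y s)⁺ + (y s)⁻ * (y s)⁻ - ((y s)⁺ * (y s)⁻ + (y s)⁻ * (y s)⁺) := by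
      simp only [sub_mul, mul_sub]; abel
    rw [h0, h0', add_zero, sub_zero, posPart_sub_negPart] at hexp
    exact hexp
  set K : A := f*f + f*g + g*g with hKdef
  have hKnn : 0 ≤ K := add_nonneg (add_nonneg (hmulpos f f hf hf) (hmulpos f g hf hg))
    (hmulpos g g hg hg)
  have hKKnn : 0 ≤ K*K := hmulpos K K hKnn hKnn
  -- pair inequality
  have hpair : ∀ r s : ℝ, 1 < r → 0 < s → (1 ≤ s ∨ r*s ≤ 1) →
      e0⁺ * e0⁺ ≤ (((y s)⁺ * (y (r*s))⁺) * ((y s)⁺ * (y (r*s))⁺)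
        + ((y s)⁻ * (y (r*s))⁻) * ((y s)⁻ * (y (r*s))⁻)) + ((r-1)*(r-1)) • (K*K) := by
    intro r s hr hs hcase
    have hrs : 0 < r*s := mul_pos (by linarith) hs
    have hst : s ≤ r*s := by nlinarith
    have q1 : e0⁺ * e0⁺ ≤ ((y s)*(y s)) * e0⁺ := cs_mul_le_mul hmulpos (hey s hs) hepos
    have q2 : ((y s)*(y s)) * e0⁺ ≤ ((y s)*(y s)) * ((y (r*s))*(y (r*s))) := by
      rw [mul_comm ((y s)*(y s)) e0⁺, mul_comm ((y s)*(y s)) _]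
      exact cs_mul_le_mul hmulpos (hey (r*s) hrs) (cs_sq_nonneg hmulpos hfalg _)
    have hexpand : ((y s)*(y s)) * ((y (r*s))*(y (r*s)))
        = ((y s)⁺ * (y (r*s))⁺) * ((y s)⁺ * (y (r*s))⁺)
        + ((y s)⁺ * (y (r*s))⁻) * ((y s)⁺ * (y (r*s))⁻)
        + ((y s)⁻ * (y (r*s))⁺) * ((y s)⁻ * (y (r*s))⁺)
        + ((y s)⁻ * (y (r*s))⁻) * ((y s)⁻ * (y (r*s))⁻) := by
      rw [hysq s, hysq (r*s)]
      rw [add_mul, mul_add, mul_add]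
      rw [cs_mul4 ((y s)⁺) ((y s)⁺) ((y (r*s))⁺) ((y (r*s))⁺),
          cs_mul4 ((y s)⁺) ((y s)⁺) ((y (r*s))⁻) ((y (r*s))⁻),
          cs_mul4 ((y s)⁻) ((y s)⁻) ((y (r*s))⁺) ((y (r*s))⁺),
          cs_mul4 ((y s)⁻) ((y s)⁻) ((y (r*s))⁻) ((y (r*s))⁻)]
      abel
    have hzero : ((y s)⁺ * (y (r*s))⁻) * ((y s)⁺ * (y (r*s))⁻) = 0 := by
      rw [hPN0 s (r*s) hs hst, zero_mul]
    rw [hzero, add_zero] at hexpand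
    -- cross bound
    have hcnn : 0 ≤ (y s)⁻ * (y (r*s))⁺ :=
      hmulpos _ _ (negPart_nonneg _) (posPart_nonneg _)
    have hcle : (y s)⁻ * (y (r*s))⁺ ≤ (r-1) • K := by
      have := cs_cross hmulpos hf hg hr hs hcase
        (by simpa only [hydef] using hPNself s)
        (by simpa only [hydef] using hPNself (r*s))
      simpa only [hydef, hKdef] using this
    have hcsq : ((y s)⁻ * (y (r*s))⁺) * ((y s)⁻ * (y (r*s))⁺) ≤ ((r-1)*(r-1)) • (K*K) := by
      have h := cs_sq_le_sq hmulpos hcnn hcle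
      have heq : ((r-1) • K) * ((r-1) • K) = ((r-1)*(r-1)) • (K*K) := by
        rw [smul_mul_assoc, mul_smul_comm, smul_smul]
      rwa [heq] at h
    calc e0⁺ * e0⁺ ≤ ((y s)*(y s)) * ((y (r*s))*(y (r*s))) := le_trans q1 q2
      _ = ((y s)⁺ * (y (r*s))⁺) * ((y s)⁺ * (y (r*s))⁺)
          + ((y s)⁻ * (y (r*s))⁺) * ((y s)⁻ * (y (r*s))⁺)
          + ((y s)⁻ * (y (r*s))⁻) * ((y s)⁻ * (y (r*s))⁻) := hexpand
      _ ≤ (((y s)⁺ * (y (r*s))⁺) * ((y s)⁺ * (y (r*s))⁺)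
          + ((y s)⁻ * (y (r*s))⁻) * ((y s)⁻ * (y (r*s))⁻)) + ((r-1)*(r-1)) • (K*K) := by
        have h1 := add_le_add_right hcsq
          (((y s)⁺ * (y (r*s))⁺) * ((y s)⁺ * (y (r*s))⁺))
        calc ((y s)⁺ * (y (r*s))⁺) * ((y s)⁺ * (y (r*s))⁺)
              + ((y s)⁻ * (y (r*s))⁺) * ((y s)⁻ * (y (r*s))⁺)
              + ((y s)⁻ * (y (r*s))⁻) * ((y s)⁻ * (y (r*s))⁻)
            ≤ ((y s)⁺ * (y (r*s))⁺) * ((y s)⁺ * (y (r*s))⁺) + ((r-1)*(r-1)) • (K*K)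
              + ((y s)⁻ * (y (r*s))⁻) * ((y s)⁻ * (y (r*s))⁻) :=
              add_le_add_left (h1) _
          _ = (((y s)⁺ * (y (r*s))⁺) * ((y s)⁺ * (y (r*s))⁺)
              + ((y s)⁻ * (y (r*s))⁻) * ((y s)⁻ * (y (r*s))⁻)) + ((r-1)*(r-1)) • (K*K) := by
              abel
  -- the grid argument: e0⁺ * e0⁺ ≤ ((r-1)*(r-1)) • (K*K) for every r > 1
  have hee_le : ∀ r : ℝ, 1 < r → e0⁺ * e0⁺ ≤ ((r-1)*(r-1)) • (K*K) := by
    intro r hr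
    have hr0 : (0:ℝ) < r := by linarith
    set D : A := (f*f)*(f*f) + (g*g)*(g*g) with hDdef
    have hDnn : 0 ≤ D := add_nonneg
      (hmulpos _ _ (hmulpos f f hf hf) (hmulpos f f hf hf))
      (hmulpos _ _ (hmulpos g g hg hg) (hmulpos g g hg hg))
    have hmain : ∀ n : ℕ,
        e0⁺ * e0⁺ - ((r-1)*(r-1)) • (K*K)
          ≤ ((r ^ ((1:ℤ) - 2*(n:ℤ))) * (r ^ ((1:ℤ) - 2*(n:ℤ)))) • D := by
      intro n
      set σ : ℕ → ℝ := fun i => r ^ ((i:ℤ) - (n:ℤ)) with hσdef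
      have hσpos : ∀ i, 0 < σ i := fun i => zpow_pos hr0 _
      have hσsucc : ∀ i : ℕ, σ (i+1) = r * σ i := by
        intro i
        simp only [hσdef]
        have hcast : (((i+1 : ℕ)):ℤ) - (n:ℤ) = 1 + ((i:ℤ) - (n:ℤ)) := by push_cast; ring
        rw [hcast, zpow_add₀ (ne_of_gt hr0), zpow_one]
      have hσmono : ∀ i j : ℕ, i ≤ j → σ i ≤ σ j := by
        intro i j hij
        simp only [hσdef]
        exact zpow_le_zpow_right₀ hr.le (by omega)
      set Aa : ℕ → A := fun i =>
        ((y (σ i))⁺ * (y (σ (i+1)))⁺) * ((y (σ i))⁺ * (y (σ (i+1)))⁺) with hAadef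
      set Bb : ℕ → A := fun i =>
        ((y (σ i))⁻ * (y (σ (i+1)))⁻) * ((y (σ i))⁻ * (y (σ (i+1)))⁻) with hBbdef
      have hAnn : ∀ i, 0 ≤ Aa i := fun i => by
        simp only [hAadef]
        exact hmulpos _ _ (hmulpos _ _ (posPart_nonneg _) (posPart_nonneg _))
          (hmulpos _ _ (posPart_nonneg _) (posPart_nonneg _))
      have hBnn : ∀ i, 0 ≤ Bb i := fun i => by
        simp only [hBbdef]
        exact hmulpos _ _ (hmulpos _ _ (negPart_nonneg _) (negPart_nonneg _))
          (hmulpos _ _ (negPart_nonneg _) (negPart_nonneg _))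
      have hdisj : ∀ i j, i ≤ j + 1 → Aa i ⊓ Bb j = 0 := by
        intro i j hij
        refine cs_nonneg_disjoint hmulpos hsemiprime (hAnn i) (hBnn j) ?_
        have hz : (y (σ i))⁺ * (y (σ (j+1)))⁻ = 0 :=
          hPN0 _ _ (hσpos i) (hσmono i (j+1) hij)
        have hre : Aa i * Bb j = ((y (σ i))⁺ * (y (σ (j+1)))⁻) *
            ((y (σ i))⁺ * ((y (σ (i+1)))⁺ * ((y (σ (i+1)))⁺ *
              ((y (σ j))⁻ * ((y (σ j))⁻ * (y (σ (j+1)))⁻))))) := by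
          simp only [hAadef, hBbdef]
          simp only [mul_assoc, mul_comm, mul_left_comm]
        rw [hre, hz, zero_mul]
      have hw : ∀ i, e0⁺ * e0⁺ - ((r-1)*(r-1)) • (K*K) ≤ Aa i + Bb i := by
        intro i
        have hcases : 1 ≤ σ i ∨ r * σ i ≤ 1 := by
          rcases le_or_gt n i with h | h
          · left
            simp only [hσdef]
            exact one_le_zpow₀ hr.le (by omega)
          · right
            rw [← hσsucc i]
            simp only [hσdef]
            exact zpow_le_one_of_nonpos₀ hr.le (by omega)
        have hp := hpair r (σ i) hr (hσpos i) hcases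
        rw [← hσsucc i] at hp
        rw [sub_le_iff_le_add]
        simpa only [hAadef, hBbdef] using hp
      have hchain := cs_chain Aa Bb (2*n) hAnn hBnn hdisj hw
      -- endpoint bounds
      set c1 : ℝ := r ^ ((1:ℤ) - 2*(n:ℤ)) with hc1def
      have hc1pos : 0 < c1 := zpow_pos hr0 _
      have hA0 : Aa 0 ≤ (c1 * c1) • ((f*f)*(f*f)) := by
        have hp0 : (y (σ 0))⁺ ≤ (σ 0) • f := hPle _ (hσpos 0)
        have hp1 : (y (σ 1))⁺ ≤ (σ 1) • f := hPle _ (hσpos 1)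
        have hnn0 : 0 ≤ (y (σ 0))⁺ := posPart_nonneg _
        have hnn1 : 0 ≤ (y (σ 1))⁺ := posPart_nonneg _
        have hb : (y (σ 0))⁺ * (y (σ 1))⁺ ≤ (σ 0 * σ 1) • (f * f) := by
          calc (y (σ 0))⁺ * (y (σ 1))⁺ ≤ ((σ 0) • f) * (y (σ 1))⁺ :=
                cs_mul_le_mul hmulpos hp0 hnn1
            _ = (y (σ 1))⁺ * ((σ 0) • f) := mul_comm _ _
            _ ≤ ((σ 1) • f) * ((σ 0) • f) :=
                cs_mul_le_mul hmulpos hp1 (smul_nonneg (hσpos 0).le hf)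
            _ = (σ 0 * σ 1) • (f * f) := by
                rw [smul_mul_assoc, mul_smul_comm, smul_smul]; congr 1; ring
        have hsq := cs_sq_le_sq hmulpos (hmulpos _ _ hnn0 hnn1) hb
        have he2 : ((σ 0 * σ 1) • (f*f)) * ((σ 0 * σ 1) • (f*f))
            = ((σ 0 * σ 1) * (σ 0 * σ 1)) • ((f*f)*(f*f)) := by
          rw [smul_mul_assoc, mul_smul_comm, smul_smul]
        have hσ01 : σ 0 * σ 1 = c1 := by
          simp only [hσdef, hc1def]
          rw [← zpow_add₀ (ne_of_gt hr0)]
          congr 1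
          push_cast; ring
        rw [he2, hσ01] at hsq
        simpa only [hAadef] using hsq
      have hBm : Bb (2*n) ≤ (c1 * c1) • ((g*g)*(g*g)) := by
        set c2 : ℝ := (σ (2*n))⁻¹ * (σ (2*n+1))⁻¹ with hc2def
        have hn0 : (y (σ (2*n)))⁻ ≤ (σ (2*n))⁻¹ • g := hNle _ (hσpos _)
        have hn1 : (y (σ (2*n+1)))⁻ ≤ (σ (2*n+1))⁻¹ • g := hNle _ (hσpos _)
        have hnn0 : 0 ≤ (y (σ (2*n)))⁻ := negPart_nonneg _
        have hnn1 : 0 ≤ (y (σ (2*n+1)))⁻ := negPart_nonneg _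
        have hb : (y (σ (2*n)))⁻ * (y (σ (2*n+1)))⁻ ≤ c2 • (g * g) := by
          calc (y (σ (2*n)))⁻ * (y (σ (2*n+1)))⁻
              ≤ ((σ (2*n))⁻¹ • g) * (y (σ (2*n+1)))⁻ := cs_mul_le_mul hmulpos hn0 hnn1
            _ = (y (σ (2*n+1)))⁻ * ((σ (2*n))⁻¹ • g) := mul_comm _ _
            _ ≤ ((σ (2*n+1))⁻¹ • g) * ((σ (2*n))⁻¹ • g) := cs_mul_le_mul hmulpos hn1
                (smul_nonneg (by positivity) hg)
            _ = c2 • (g * g) := by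
                rw [smul_mul_assoc, mul_smul_comm, smul_smul, hc2def]; congr 1; ring
        have hsq := cs_sq_le_sq hmulpos (hmulpos _ _ hnn0 hnn1) hb
        have he2 : (c2 • (g*g)) * (c2 • (g*g)) = (c2 * c2) • ((g*g)*(g*g)) := by
          rw [smul_mul_assoc, mul_smul_comm, smul_smul]
        rw [he2] at hsq
        have hc2pos : 0 < c2 := by
          rw [hc2def]; positivity
        have hc2c1 : c2 ≤ c1 := by
          rw [hc2def, hc1def]
          simp only [hσdef]
          rw [← zpow_neg, ← zpow_neg, ← zpow_add₀ (ne_of_gt hr0)]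
          exact zpow_le_zpow_right₀ hr.le (by omega)
        have hc22 : c2 * c2 ≤ c1 * c1 :=
          mul_le_mul hc2c1 hc2c1 hc2pos.le (le_trans hc2pos.le hc2c1)
        refine le_trans ?_ (cs_smul_le hc22 (hmulpos _ _ (hmulpos g g hg hg) (hmulpos g g hg hg)))
        simpa only [hBbdef] using hsq
      calc e0⁺ * e0⁺ - ((r-1)*(r-1)) • (K*K) ≤ Aa 0 + Bb (2*n) := hchain
        _ ≤ (c1*c1) • ((f*f)*(f*f)) + (c1*c1) • ((g*g)*(g*g)) := add_le_add hA0 hBm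
        _ = (c1*c1) • D := by rw [hDdef, smul_add]
    -- Archimedean step 1
    have harch1 : ∀ N : ℕ, (N:ℝ) • (e0⁺ * e0⁺ - ((r-1)*(r-1)) • (K*K)) ≤ D := by
      intro N
      obtain ⟨k, hk⟩ := pow_unbounded_of_one_lt (N:ℝ) hr
      have hmn := hmain (k+1)
      have hsc : (N:ℝ) * ((r ^ ((1:ℤ) - 2*((k+1:ℕ):ℤ))) * (r ^ ((1:ℤ) - 2*((k+1:ℕ):ℤ)))) ≤ 1 := by
        have hee : (r ^ ((1:ℤ) - 2*((k+1:ℕ):ℤ))) * (r ^ ((1:ℤ) - 2*((k+1:ℕ):ℤ)))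
            = (r ^ ((4*k+2:ℕ)))⁻¹ := by
          rw [← zpow_add₀ (ne_of_gt hr0),
            (by push_cast; ring :
              ((1:ℤ) - 2*((k+1:ℕ):ℤ)) + ((1:ℤ) - 2*((k+1:ℕ):ℤ)) = -(((4*k+2:ℕ):ℤ))),
            zpow_neg, zpow_natCast]
        rw [hee, ← div_eq_mul_inv, div_le_one (by positivity)]
        calc (N:ℝ) ≤ r ^ k := hk.le
          _ ≤ r ^ (4*k+2) := pow_le_pow_right₀ hr.le (by omega)
      calc (N:ℝ) • (e0⁺ * e0⁺ - ((r-1)*(r-1)) • (K*K))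
          ≤ (N:ℝ) • (((r ^ ((1:ℤ) - 2*((k+1:ℕ):ℤ))) * (r ^ ((1:ℤ) - 2*((k+1:ℕ):ℤ)))) • D) :=
            smul_le_smul_of_nonneg_left hmn (Nat.cast_nonneg N)
        _ = ((N:ℝ) * ((r ^ ((1:ℤ) - 2*((k+1:ℕ):ℤ))) * (r ^ ((1:ℤ) - 2*((k+1:ℕ):ℤ))))) • D := by
            rw [smul_smul]
        _ ≤ (1:ℝ) • D := cs_smul_le hsc hDnn
        _ = D := one_smul _ _
    have hle0 := harch _ _ harch1
    exact sub_nonpos.1 hle0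
  -- Archimedean step 2
  have harch2 : ∀ N : ℕ, (N:ℝ) • (e0⁺ * e0⁺) ≤ K*K := by
    intro N
    set r : ℝ := 1 + ((N:ℝ)+1)⁻¹ with hrdef
    have hNpos : (0:ℝ) < (N:ℝ)+1 := by positivity
    have hr : 1 < r := by
      rw [hrdef]
      nlinarith [inv_pos.2 hNpos]
    have h := hee_le r hr
    have hr1 : r - 1 = ((N:ℝ)+1)⁻¹ := by rw [hrdef]; ring
    have hsc : (N:ℝ) * ((r-1)*(r-1)) ≤ 1 := by
      rw [hr1,
        (by rw [div_eq_mul_inv, mul_inv] :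
          (N:ℝ)/((((N:ℝ)+1))*(((N:ℝ)+1))) = (N:ℝ) * (((N:ℝ)+1)⁻¹ * ((N:ℝ)+1)⁻¹)).symm,
        div_le_one (by positivity)]
      nlinarith [(Nat.cast_nonneg N : (0:ℝ) ≤ (N:ℝ))]
    calc (N:ℝ) • (e0⁺ * e0⁺) ≤ (N:ℝ) • (((r-1)*(r-1)) • (K*K)) :=
          smul_le_smul_of_nonneg_left h (Nat.cast_nonneg N)
      _ = ((N:ℝ) * ((r-1)*(r-1))) • (K*K) := by rw [smul_smul]
      _ ≤ (1:ℝ) • (K*K) := cs_smul_le hsc hKKnn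
      _ = K*K := one_smul _ _
  have hee0 : e0⁺ * e0⁺ ≤ 0 := harch _ _ harch2
  have hee0' : e0⁺ * e0⁺ = 0 := le_antisymm hee0 (hmulpos _ _ hepos hepos)
  have hzero : e0⁺ = 0 := hsemiprime _ hee0'
  have he0le : e0 ≤ 0 := posPart_eq_zero.1 hzero
  have h44 : (4:ℝ)•(a*a) ≤ (4:ℝ)•(f*g) := by
    rw [he0def] at he0le
    exact sub_nonpos.1 he0le
  have hq4 := smul_le_smul_of_nonneg_left h44 (by norm_num : (0:ℝ) ≤ (4:ℝ)⁻¹)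
  rwa [smul_smul, smul_smul, (by norm_num : (4:ℝ)⁻¹ * 4 = 1), one_smul, one_smul] at hq4

end CSMain

/-- **Corollary 3.2(3) (real case), Cauchy–Schwarz inequality.** For a bilinear, symmetric,
positive semidefinite map `T` into a geometric mean closed semiprime Archimedean
`f`-algebra `A`, `|T(u,v)|² ≤ T(u,u) * T(v,v)`. -/
theorem stmt6 {V : Type*} [AddCommGroup V] [Module ℝ V]
    {A : Type*} [NonUnitalCommRing A] [Lattice A]
    [CovariantClass A A (· + ·) (· ≤ ·)]
    [Module ℝ A] [PosSMulMono ℝ A]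
    [IsScalarTower ℝ A A] [SMulCommClass ℝ A A]
    (harch : ∀ f g : A, (∀ n : ℕ, (n : ℝ) • f ≤ g) → f ≤ 0)
    (hmulpos : ∀ a b : A, 0 ≤ a → 0 ≤ b → 0 ≤ a * b)
    (hfalg : ∀ a b c : A, a ⊓ b = 0 → 0 ≤ c → (c * a) ⊓ b = 0)
    (hsemiprime : ∀ a : A, a * a = 0 → a = 0)
    (hgm : ∀ f g : A, 0 ≤ f → 0 ≤ g →
      ∃ m, IsGLB {x | ∃ θ : ℝ, 0 < θ ∧ x = θ • f + θ⁻¹ • g} m)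
    (T : V →ₗ[ℝ] V →ₗ[ℝ] A)
    (hsymm : ∀ u v : V, T u v = T v u)
    (hpos : ∀ v : V, 0 ≤ T v v)
    (u v : V) :
    |T u v| * |T u v| ≤ T u u * T v v := by
  have hexp : ∀ c : ℝ, T (c • u + v) (c • u + v)
      = (c*c) • (T u u) + (2*c) • (T u v) + T v v := by
    intro c
    simp only [map_add, map_smul, LinearMap.add_apply, LinearMap.smul_apply, smul_add,
      smul_smul]
    rw [hsymm v u]
    module
  have hq : ∀ s : ℝ, 0 < s → (2*s) • |T u v| ≤ (s*s) • (T u u) + T v v := by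
    intro s hs
    have h1 := hpos (s • u + v)
    rw [hexp s] at h1
    have h2 := hpos ((-s) • u + v)
    rw [hexp (-s)] at h2
    have hb1 : -((2*s) • T u v) ≤ (s*s) • (T u u) + T v v := by
      have h1' : 0 ≤ ((s*s) • (T u u) + T v v) + (2*s) • T u v := by
        calc (0:A) ≤ (s*s) • (T u u) + (2*s) • (T u v) + T v v := h1
          _ = ((s*s) • (T u u) + T v v) + (2*s) • T u v := by abel
      rw [← sub_nonneg, sub_neg_eq_add]
      exact h1'
    have hb2 : (2*s) • T u v ≤ (s*s) • (T u u) + T v v := by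
      rw [(by ring : (-s) * (-s) = s*s), (by ring : 2 * (-s) = -(2*s)), neg_smul] at h2
      have h2' : 0 ≤ ((s*s) • (T u u) + T v v) - (2*s) • T u v := by
        calc (0:A) ≤ (s*s) • (T u u) + -((2*s) • (T u v)) + T v v := h2
          _ = ((s*s) • (T u u) + T v v) - (2*s) • T u v := by abel
      rw [← sub_nonneg]
      exact h2'
    have hc : (0:ℝ) < 2*s := by linarith
    have habs : |T u v| ≤ (2*s)⁻¹ • ((s*s) • (T u u) + T v v) := by
      rw [abs_le']
      constructor
      · have := smul_le_smul_of_nonneg_left hb2 (le_of_lt (inv_pos.2 hc))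
        rwa [smul_smul, inv_mul_cancel₀ (ne_of_gt hc), one_smul] at this
      · have := smul_le_smul_of_nonneg_left hb1 (le_of_lt (inv_pos.2 hc))
        rwa [smul_neg, smul_smul, inv_mul_cancel₀ (ne_of_gt hc), one_smul] at this
    have := smul_le_smul_of_nonneg_left habs (le_of_lt hc)
    rwa [smul_smul, mul_inv_cancel₀ (ne_of_gt hc), one_smul] at this
  exact cs_main harch hmulpos hfalg hsemiprime (abs_nonneg _) (hpos u) (hpos v) hq
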